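/- For every ε > 0 there exist integers U, V and k ≥ 1 such that the sequence X_0 = U, X_1 = V, X_{n+1} = X_n + X_{n−1} satisfies X_{k−1}, X_k ≥ 1 and X_n/F_n → A√5 with |A√5 − √τ| < ε, where A = (τV + U)/(τ + 2), τ = (√5+1)/2, and F_n is the n-th Fibonacci number. -/

import Mathlib

/-- The sequence X_0 = U, X_1 = V, X_{n+1} = X_n + X_{n−1}. -/
noncomputable def Xseq (U V : ℤ) : ℕ → ℝ
  | 0 => (U : ℝ)
  | 1 => (V : ℝ)
  | n + 2 => Xseq U V (n + 1) + Xseq U V n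

/-- Density of `{V + Uθ : U V : ℤ}` for irrational `θ`. -/
lemma exists_UV_aux (θ : ℝ) (hθ : Irrational θ) (x ε : ℝ) (hε : 0 < ε) :
    ∃ U V : ℤ, |((V : ℝ) + U * θ) - x| < ε := by
  set S : AddSubgroup ℝ :=
    { carrier := {y | ∃ U V : ℤ, y = (V : ℝ) + U * θ}
      zero_mem' := ⟨0, 0, by simp⟩
      add_mem' := by
        rintro a b ⟨U1, V1, rfl⟩ ⟨U2, V2, rfl⟩
        exact ⟨U1 + U2, V1 + V2, by push_cast; ring⟩
      neg_mem' := by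
        rintro a ⟨U1, V1, rfl⟩
        exact ⟨-U1, -V1, by push_cast; ring⟩ } with hS
  have hdense : Dense (S : Set ℝ) := by
    rcases S.dense_or_cyclic with h | ⟨a, ha⟩
    · exact h
    · exfalso
      have h1 : (1 : ℝ) ∈ S := ⟨0, 1, by simp⟩
      have h2 : θ ∈ S := ⟨1, 0, by simp⟩
      rw [ha, AddSubgroup.mem_closure_singleton] at h1 h2
      obtain ⟨m, hm⟩ := h1
      obtain ⟨n, hn⟩ := h2
      have hm0 : (m : ℝ) ≠ 0 := by
        rintro h
        rw [zsmul_eq_mul, h, zero_mul] at hm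
        exact one_ne_zero hm.symm
      refine hθ ⟨(n : ℚ) / (m : ℚ), ?_⟩
      rw [zsmul_eq_mul] at hm hn
      have ha' : a = 1 / (m : ℝ) := by field_simp at hm ⊢; linarith [hm]
      push_cast
      rw [← hn, ha']
      field_simp
  have hx := hdense x
  rw [Metric.mem_closure_iff] at hx
  obtain ⟨y, ⟨U, V, rfl⟩, hy⟩ := hx ε hε
  exact ⟨U, V, by rw [Real.dist_eq, abs_sub_comm] at hy; exact hy⟩

/-- Closed form for `Xseq`. -/
lemma xseq_closed (U V : ℤ) (n : ℕ) :
    Xseq U V n = ((V : ℝ) + U * ((Real.sqrt 5 - 1) / 2)) * Nat.fib n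
      + U * ((1 - Real.sqrt 5) / 2) ^ n := by
  have h5 : Real.sqrt 5 ^ 2 = 5 := Real.sq_sqrt (by norm_num)
  set θ : ℝ := (Real.sqrt 5 - 1) / 2
  set s : ℝ := (1 - Real.sqrt 5) / 2 with hs
  have hs2 : s ^ 2 = s + 1 := by rw [hs]; nlinarith [h5]
  set L : ℝ := (V : ℝ) + U * θ with hL
  have key : ∀ m, Xseq U V m = L * Nat.fib m + U * s ^ m ∧
      Xseq U V (m + 1) = L * Nat.fib (m + 1) + U * s ^ (m + 1) := by
    intro m
    induction m with
    | zero => constructor <;> simp [Xseq, hL, hs] <;> ring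
    | succ m ih =>
      refine ⟨ih.2, ?_⟩
      show Xseq U V (m + 2) = _
      rw [show Xseq U V (m + 2) = Xseq U V (m + 1) + Xseq U V m from rfl,
        ih.1, ih.2, Nat.fib_add_two]
      push_cast
      have hpow : s ^ (m + 2) = s ^ (m + 1) + s ^ m := by
        have h' : s ^ (m + 2) = s ^ m * s ^ 2 := by ring
        rw [h', hs2]; ring
      rw [hpow]; ring
  exact (key n).1

theorem exists_Xseq (ε : ℝ) (hε : 0 < ε) :
    ∃ (U V : ℤ) (k : ℕ), 1 ≤ k ∧
      1 ≤ Xseq U V (k - 1) ∧ 1 ≤ Xseq U V k ∧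
      (let τ : ℝ := (Real.sqrt 5 + 1) / 2
       let A : ℝ := (τ * V + U) / (τ + 2)
       |A * Real.sqrt 5 - Real.sqrt τ| < ε ∧
       Filter.Tendsto (fun n => Xseq U V n / (Nat.fib n : ℝ)) Filter.atTop
         (nhds (A * Real.sqrt 5))) := by
  have h5 : Real.sqrt 5 ^ 2 = 5 := Real.sq_sqrt (by norm_num)
  have h5nn : (0:ℝ) ≤ Real.sqrt 5 := Real.sqrt_nonneg 5
  have h5lb : (11/5 : ℝ) < Real.sqrt 5 := by nlinarith [h5, h5nn]
  have h5ub : Real.sqrt 5 < 3 := by nlinarith [h5, h5nn]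
  set τ : ℝ := (Real.sqrt 5 + 1) / 2 with hτdef
  set θ : ℝ := (Real.sqrt 5 - 1) / 2 with hθdef
  set s : ℝ := (1 - Real.sqrt 5) / 2 with hsdef
  have hθirr : Irrational θ := by
    have h1 : Irrational (Real.sqrt 5) := by
      have := (by norm_num : Nat.Prime 5).irrational_sqrt
      simpa using this
    have h2 : Irrational (Real.sqrt 5 - (1:ℤ)) := h1.sub_intCast 1
    have h3 : Irrational ((Real.sqrt 5 - (1:ℤ)) / (2:ℤ)) := h2.div_intCast (by norm_num)
    simpa [hθdef] using h3
  -- pick U V with V + Uθ close to √τ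
  set ε' : ℝ := min ε (1/5) with hε'def
  have hε' : 0 < ε' := lt_min hε (by norm_num)
  obtain ⟨U, V, hUV⟩ := exists_UV_aux θ hθirr (Real.sqrt τ) ε' hε'
  set L : ℝ := (V : ℝ) + U * θ with hLdef
  -- lower bound on √τ and on L
  have hτlb : (6/5 : ℝ) ≤ Real.sqrt τ := by
    have : ((6:ℝ)/5)^2 ≤ τ := by rw [hτdef]; nlinarith [h5lb]
    nlinarith [Real.sq_sqrt (show (0:ℝ) ≤ τ by rw [hτdef]; nlinarith),
      Real.sqrt_nonneg τ]
  have hL1 : (1:ℝ) ≤ L := by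
    have h1 : |L - Real.sqrt τ| < 1/5 := lt_of_lt_of_le hUV (min_le_right _ _)
    have := abs_lt.mp h1
    linarith [this.1]
  -- bounds on s
  have hs_abs : |s| < 1 := by
    rw [abs_lt]; constructor <;> rw [hsdef] <;> nlinarith [h5lb, h5ub]
  have hs_abs1 : |s| ≤ 1 := le_of_lt hs_abs
  -- the value of A * √5
  have hτ2pos : (0:ℝ) < τ + 2 := by rw [hτdef]; nlinarith
  have hAL : ((τ * V + U) / (τ + 2)) * Real.sqrt 5 = L := by
    rw [hLdef, hθdef, hτdef]
    field_simp
    linear_combination (2*(V:ℝ) - (U:ℝ)) * h5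
  -- choose k
  set m : ℕ := U.natAbs + 6 with hmdef
  have hUabs : |(U:ℝ)| = (U.natAbs : ℝ) := by
    rw [← Int.cast_abs, Int.abs_eq_natAbs, Int.cast_natCast]
  have hpos : ∀ n : ℕ, U.natAbs + 1 ≤ Nat.fib n → 1 ≤ Xseq U V n := by
    intro n hn
    rw [xseq_closed]
    have h1 : |(U:ℝ) * s ^ n| ≤ (U.natAbs : ℝ) := by
      rw [abs_mul, abs_pow, hUabs]
      calc (U.natAbs : ℝ) * |s| ^ n ≤ (U.natAbs : ℝ) * 1 := by
            apply mul_le_mul_of_nonneg_left (pow_le_one₀ (abs_nonneg s) hs_abs1)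
              (Nat.cast_nonneg _)
        _ = _ := mul_one _
    have h2 : (U.natAbs : ℝ) + 1 ≤ (Nat.fib n : ℝ) := by exact_mod_cast hn
    have h3 : (Nat.fib n : ℝ) ≤ L * (Nat.fib n : ℝ) := by
      nlinarith [Nat.cast_nonneg (α := ℝ) (Nat.fib n), hL1]
    have h4 : -(U.natAbs : ℝ) ≤ (U:ℝ) * s ^ n := neg_le_of_abs_le h1
    rw [← hθdef, ← hsdef, ← hLdef]
    linarith
  have hfib_m : U.natAbs + 1 ≤ Nat.fib m := by
    have : m ≤ Nat.fib m := Nat.le_fib_self (by omega)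
    omega
  have hfib_m1 : U.natAbs + 1 ≤ Nat.fib (m + 1) :=
    le_trans hfib_m (Nat.fib_le_fib_succ)
  -- the limit
  have hlim : Filter.Tendsto (fun n => Xseq U V n / (Nat.fib n : ℝ))
      Filter.atTop (nhds L) := by
    have hzero : Filter.Tendsto (fun n : ℕ => (U:ℝ) * s ^ n / (Nat.fib n : ℝ))
        Filter.atTop (nhds 0) := by
      apply squeeze_zero_norm' (a := fun n : ℕ => |(U:ℝ)| * |s| ^ n)
      · filter_upwards [Filter.eventually_atTop.mpr ⟨1, fun n hn => hn⟩] with n hn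
        have hfib1 : (1:ℝ) ≤ (Nat.fib n : ℝ) := by
          exact_mod_cast Nat.fib_pos.mpr (by omega)
        rw [Real.norm_eq_abs, abs_div, abs_mul, abs_pow]
        rw [div_le_iff₀ (by positivity)]
        calc |(U:ℝ)| * |s| ^ n = |(U:ℝ)| * |s| ^ n * 1 := (mul_one _).symm
          _ ≤ |(U:ℝ)| * |s| ^ n * |(Nat.fib n : ℝ)| := by
              apply mul_le_mul_of_nonneg_left _ (by positivity)
              rw [abs_of_nonneg (by positivity)]; exact hfib1
      · have := (tendsto_pow_atTop_nhds_zero_of_lt_one (abs_nonneg s) hs_abs).const_mul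
          |(U:ℝ)|
        simpa using this
    have heq : ∀ᶠ n in Filter.atTop,
        L + (U:ℝ) * s ^ n / (Nat.fib n : ℝ) = Xseq U V n / (Nat.fib n : ℝ) := by
      filter_upwards [Filter.eventually_atTop.mpr ⟨1, fun n hn => hn⟩] with n hn
      have hfib0 : (Nat.fib n : ℝ) ≠ 0 := by
        exact_mod_cast Nat.pos_iff_ne_zero.mp (Nat.fib_pos.mpr (by omega))
      rw [xseq_closed, ← hθdef, ← hsdef, ← hLdef]
      field_simp
    have := (tendsto_const_nhds.add hzero).congr' heq
    simpa using this
  refine ⟨U, V, m + 1, by omega, ?_, ?_, ?_, ?_⟩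
  · simpa using hpos m hfib_m
  · exact hpos (m + 1) hfib_m1
  · show |((τ * V + U) / (τ + 2)) * Real.sqrt 5 - Real.sqrt τ| < ε
    rw [hAL]
    exact lt_of_lt_of_le hUV (min_le_left _ _)
  · show Filter.Tendsto _ Filter.atTop (nhds (((τ * V + U) / (τ + 2)) * Real.sqrt 5))
    rw [hAL]
    exact hlim
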